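/- Let (Z_{ij})_{(i,j)∈ℕ²} be a separately exchangeable and dissociated array of random vectors in ℝ^d, let f : ℝ^d → ℝ be Borel measurable with E[f(Z_{11})²] ≤ K for a constant K ≥ 0, and let N, M ≥ 1 be integers with C := min(N,M). Then Var((NM)^{-1} · Σ_{i=1}^N Σ_{j=1}^M f(Z_{ij})) ≤ 3K/C. -/

import Mathlib

open MeasureTheory ProbabilityTheory


open MeasureTheory ProbabilityTheory

/-- An array `Z` of random vectors is separately exchangeable if relabeling rows
and columns by permutations leaves the joint law unchanged. -/
def SepExch {Ω E : Type*} [MeasurableSpace Ω] [MeasurableSpace E]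
    (P : Measure Ω) (Z : ℕ → ℕ → Ω → E) : Prop :=
  ∀ π₁ π₂ : Equiv.Perm ℕ,
    Measure.map (fun ω => fun p : ℕ × ℕ => Z (π₁ p.1) (π₂ p.2) ω) P =
      Measure.map (fun ω => fun p : ℕ × ℕ => Z p.1 p.2 ω) P

/-- An array `Z` is dissociated if for every `(c₁,c₂)` the upper-left block
`(Z_{ij})_{i≤c₁, j≤c₂}` is independent of the lower-right block
`(Z_{ij})_{i>c₁, j>c₂}`. -/
def Dissociated {Ω E : Type*} [MeasurableSpace Ω] [MeasurableSpace E]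
    (P : Measure Ω) (Z : ℕ → ℕ → Ω → E) : Prop :=
  ∀ c₁ c₂ : ℕ,
    IndepFun
      (fun ω => fun p : {i : ℕ // i ≤ c₁} × {j : ℕ // j ≤ c₂} => Z p.1 p.2 ω)
      (fun ω => fun p : {i : ℕ // c₁ < i} × {j : ℕ // c₂ < j} => Z p.1 p.2 ω) P

/-- Variance `Var(X) = E[X²] − (E[X])²`. -/
noncomputable def var {Ω : Type*} [MeasurableSpace Ω] (P : Measure Ω) (X : Ω → ℝ) : ℝ :=
  (∫ ω, (X ω) ^ 2 ∂P) - (∫ ω, X ω ∂P) ^ 2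



noncomputable def permSend (i k : ℕ) : Equiv.Perm ℕ :=
  (Equiv.swap 2 (Equiv.swap 1 i k)).trans (Equiv.swap 1 i)

lemma permSend_one (i k : ℕ) (h : i ≠ k) : permSend i k 1 = i := by
  have h1 : (1:ℕ) ≠ Equiv.swap 1 i k := by
    intro hc
    apply h
    have := congrArg (Equiv.swap 1 i) hc
    rw [Equiv.swap_apply_left, Equiv.swap_apply_self] at this
    exact this
  show (Equiv.swap 1 i) ((Equiv.swap 2 (Equiv.swap 1 i k)) 1) = i
  rw [Equiv.swap_apply_of_ne_of_ne (by norm_num) h1, Equiv.swap_apply_left]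

lemma permSend_two (i k : ℕ) : permSend i k 2 = k := by
  show (Equiv.swap 1 i) ((Equiv.swap 2 (Equiv.swap 1 i k)) 2) = k
  rw [Equiv.swap_apply_left, Equiv.swap_apply_self]

section Aux
variable {Ω : Type*} [MeasurableSpace Ω] (P : Measure Ω) [IsProbabilityMeasure P]
  {d : ℕ} (Z : ℕ → ℕ → Ω → (Fin d → ℝ))

/-- marginal laws agree -/
lemma law_single (hmeas : ∀ i j, Measurable (Z i j)) (hexch : SepExch P Z) (i j : ℕ) :
    Measure.map (Z i j) P = Measure.map (Z 1 1) P := by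
  have key := hexch (Equiv.swap 1 i) (Equiv.swap 1 j)
  have hφ : Measurable (fun g : ℕ × ℕ → (Fin d → ℝ) => g (1,1)) := measurable_pi_apply _
  have hF : Measurable (fun ω => fun p : ℕ × ℕ =>
      Z (Equiv.swap 1 i p.1) (Equiv.swap 1 j p.2) ω) :=
    measurable_pi_lambda _ fun p => hmeas _ _
  have hG : Measurable (fun ω => fun p : ℕ × ℕ => Z p.1 p.2 ω) :=
    measurable_pi_lambda _ fun p => hmeas _ _
  have := congrArg (Measure.map (fun g : ℕ × ℕ → (Fin d → ℝ) => g (1,1))) key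
  rwa [Measure.map_map hφ hF, Measure.map_map hφ hG,
    show ((fun g : ℕ × ℕ → (Fin d → ℝ) => g (1,1)) ∘ (fun ω => fun p : ℕ × ℕ =>
      Z (Equiv.swap 1 i p.1) (Equiv.swap 1 j p.2) ω)) = Z i j by
        funext ω; simp [Equiv.swap_apply_left],
    show ((fun g : ℕ × ℕ → (Fin d → ℝ) => g (1,1)) ∘ (fun ω => fun p : ℕ × ℕ =>
      Z p.1 p.2 ω)) = Z 1 1 from rfl] at this

/-- pair laws agree with the (1,1),(2,2) pair when rows and columns differ -/
lemma law_pair (hmeas : ∀ i j, Measurable (Z i j)) (hexch : SepExch P Z)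
    {i j k l : ℕ} (hik : i ≠ k) (hjl : j ≠ l) :
    Measure.map (fun ω => (Z i j ω, Z k l ω)) P =
      Measure.map (fun ω => (Z 1 1 ω, Z 2 2 ω)) P := by
  set π₁ := permSend i k
  set π₂ := permSend j l
  have key := hexch π₁ π₂
  have hφ : Measurable (fun g : ℕ × ℕ → (Fin d → ℝ) => (g (1,1), g (2,2))) :=
    (measurable_pi_apply _).prodMk (measurable_pi_apply _)
  have hF : Measurable (fun ω => fun p : ℕ × ℕ => Z (π₁ p.1) (π₂ p.2) ω) :=
    measurable_pi_lambda _ fun p => hmeas _ _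
  have hG : Measurable (fun ω => fun p : ℕ × ℕ => Z p.1 p.2 ω) :=
    measurable_pi_lambda _ fun p => hmeas _ _
  have := congrArg (Measure.map (fun g : ℕ × ℕ → (Fin d → ℝ) => (g (1,1), g (2,2)))) key
  rwa [Measure.map_map hφ hF, Measure.map_map hφ hG,
    show ((fun g : ℕ × ℕ → (Fin d → ℝ) => (g (1,1), g (2,2))) ∘
      (fun ω => fun p : ℕ × ℕ => Z (π₁ p.1) (π₂ p.2) ω)) =
      (fun ω => (Z i j ω, Z k l ω)) by
        funext ω
        simp only [Function.comp_apply]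
        rw [permSend_one i k hik, permSend_one j l hjl, permSend_two, permSend_two],
    show ((fun g : ℕ × ℕ → (Fin d → ℝ)  => (g (1,1), g (2,2))) ∘
      (fun ω => fun p : ℕ × ℕ => Z p.1 p.2 ω)) = (fun ω => (Z 1 1 ω, Z 2 2 ω)) from rfl]
    at this

lemma indep_11_22 (hdiss : Dissociated P Z) :
    IndepFun (Z 1 1) (Z 2 2) P := by
  have h := hdiss 1 1
  have hφ : Measurable (fun v : ({i : ℕ // i ≤ 1} × {j : ℕ // j ≤ 1}) → (Fin d → ℝ) =>
      v (⟨1, le_refl 1⟩, ⟨1, le_refl 1⟩)) := measurable_pi_apply _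
  have hψ : Measurable (fun v : ({i : ℕ // 1 < i} × {j : ℕ // 1 < j}) → (Fin d → ℝ) =>
      v (⟨2, one_lt_two⟩, ⟨2, one_lt_two⟩)) := measurable_pi_apply _
  exact h.comp hφ hψ

end Aux
/-- **Variance bound for the empirical average of a separately exchangeable,
dissociated array**: if `E[f(Z_{11})²] ≤ K` then
`Var((NM)^{-1}·Σᵢ Σⱼ f(Z_{ij})) ≤ 3K/C` with `C = min(N,M)`. -/
theorem stmt14
    {Ω : Type*} [MeasurableSpace Ω] (P : Measure Ω) [IsProbabilityMeasure P]
    (d : ℕ) (Z : ℕ → ℕ → Ω → (Fin d → ℝ))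
    (hmeas : ∀ i j, Measurable (Z i j))
    (hexch : SepExch P Z) (hdiss : Dissociated P Z)
    (f : (Fin d → ℝ) → ℝ) (hf : Measurable f)
    (K : ℝ) (hK : 0 ≤ K)
    (hint : Integrable (fun ω => (f (Z 1 1 ω)) ^ 2) P)
    (hbound : ∫ ω, (f (Z 1 1 ω)) ^ 2 ∂P ≤ K)
    (N M : ℕ) (hN : 1 ≤ N) (hM : 1 ≤ M)
    (C : ℕ) (hC : C = min N M) :
    var P (fun ω => ((N : ℝ) * (M : ℝ))⁻¹ *
        ∑ i ∈ Finset.Icc 1 N, ∑ j ∈ Finset.Icc 1 M, f (Z i j ω))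
      ≤ 3 * K / C := by
  have hgm : ∀ i j, Measurable (fun ω => f (Z i j ω)) := fun i j => hf.comp (hmeas i j)
  set μ := ∫ ω, f (Z 1 1 ω) ∂P with hμdef
  have hfsq : Measurable (fun x => (f x) ^ 2) := hf.pow_const 2
  -- equal second moments
  have hEsq : ∀ i j, ∫ ω, (f (Z i j ω)) ^ 2 ∂P = ∫ ω, (f (Z 1 1 ω)) ^ 2 ∂P := by
    intro i j
    rw [← integral_map (hmeas i j).aemeasurable hfsq.aestronglyMeasurable,
      law_single P Z hmeas hexch i j,
      integral_map (hmeas 1 1).aemeasurable hfsq.aestronglyMeasurable]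
  -- equal first moments
  have hE : ∀ i j, ∫ ω, f (Z i j ω) ∂P = μ := by
    intro i j
    rw [hμdef, ← integral_map (hmeas i j).aemeasurable hf.aestronglyMeasurable,
      law_single P Z hmeas hexch i j,
      integral_map (hmeas 1 1).aemeasurable hf.aestronglyMeasurable]
  -- integrability of squares
  have hintsq : ∀ i j, Integrable (fun ω => (f (Z i j ω)) ^ 2) P := by
    intro i j
    have h1 : Integrable (fun x => (f x) ^ 2) (Measure.map (Z 1 1) P) := by
      rw [integrable_map_measure hfsq.aestronglyMeasurable (hmeas 1 1).aemeasurable]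
      exact hint
    rw [← law_single P Z hmeas hexch i j,
      integrable_map_measure hfsq.aestronglyMeasurable (hmeas i j).aemeasurable] at h1
    exact h1
  -- integrability of the variables themselves
  have hint1 : ∀ i j, Integrable (fun ω => f (Z i j ω)) P := by
    intro i j
    refine ((hintsq i j).add (integrable_const 1)).mono' (hgm i j).aestronglyMeasurable ?_
    filter_upwards with ω
    simp only [Pi.add_apply, Real.norm_eq_abs]
    have h := sq_abs (f (Z i j ω))
    nlinarith [abs_nonneg (f (Z i j ω)), sq_nonneg (|f (Z i j ω)| - 1)]
  -- integrability of products
  have hintprod : ∀ i j k l, Integrable (fun ω => f (Z i j ω) * f (Z k l ω)) P := by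
    intro i j k l
    refine (((hintsq i j).add (hintsq k l)).div_const 2).mono'
      ((hgm i j).mul (hgm k l)).aestronglyMeasurable ?_
    filter_upwards with ω
    simp only [Pi.add_apply, Real.norm_eq_abs]
    rw [abs_mul]
    nlinarith [sq_nonneg (|f (Z i j ω)| - |f (Z k l ω)|), sq_abs (f (Z i j ω)),
      sq_abs (f (Z k l ω)), abs_nonneg (f (Z i j ω)), abs_nonneg (f (Z k l ω))]
  -- products bounded by K
  have hEprod_le : ∀ i j k l, ∫ ω, f (Z i j ω) * f (Z k l ω) ∂P ≤ K := by
    intro i j k l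
    have h1 : ∫ ω, f (Z i j ω) * f (Z k l ω) ∂P
        ≤ ∫ ω, ((f (Z i j ω)) ^ 2 + (f (Z k l ω)) ^ 2) / 2 ∂P := by
      refine integral_mono (hintprod i j k l) (((hintsq i j).add (hintsq k l)).div_const 2)
        (fun ω => ?_)
      nlinarith [sq_nonneg (f (Z i j ω) - f (Z k l ω))]
    rw [integral_div, integral_add (hintsq i j) (hintsq k l), hEsq i j, hEsq k l] at h1
    linarith
  -- off-diagonal products equal μ²
  have hEprod_eq : ∀ i j k l : ℕ, i ≠ k → j ≠ l →
      ∫ ω, f (Z i j ω) * f (Z k l ω) ∂P = μ ^ 2 := by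
    intro i j k l hik hjl
    have hpm : Measurable (fun x : (Fin d → ℝ) × (Fin d → ℝ) => f x.1 * f x.2) :=
      (hf.comp measurable_fst).mul (hf.comp measurable_snd)
    have h1 : ∫ ω, f (Z i j ω) * f (Z k l ω) ∂P = ∫ ω, f (Z 1 1 ω) * f (Z 2 2 ω) ∂P := by
      rw [← integral_map ((hmeas i j).prodMk (hmeas k l)).aemeasurable
          hpm.aestronglyMeasurable,
        law_pair P Z hmeas hexch hik hjl,
        integral_map ((hmeas 1 1).prodMk (hmeas 2 2)).aemeasurable
          hpm.aestronglyMeasurable]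
    have hind : IndepFun (fun ω => f (Z 1 1 ω)) (fun ω => f (Z 2 2 ω)) P :=
      (indep_11_22 P Z hdiss).comp hf hf
    have h2 := hind.integral_mul_eq_mul_integral (hint1 1 1).aestronglyMeasurable (hint1 2 2).aestronglyMeasurable
    have h3 : (fun ω => f (Z 1 1 ω)) * (fun ω => f (Z 2 2 ω))
        = fun ω => f (Z 1 1 ω) * f (Z 2 2 ω) := rfl
    rw [h3] at h2
    rw [h1, h2, hE 2 2, ← hμdef, sq]
  -- μ² ≤ K
  have hμ2 : μ ^ 2 ≤ K := by
    have hmem : MemLp (fun ω => f (Z 1 1 ω)) 2 P :=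
      (memLp_two_iff_integrable_sq (hgm 1 1).aestronglyMeasurable).2 hint
    have h0 := variance_nonneg (fun ω => f (Z 1 1 ω)) P
    rw [variance_eq_sub hmem] at h0
    simp only [Pi.pow_apply] at h0
    have : μ ^ 2 ≤ ∫ ω, (f (Z 1 1 ω)) ^ 2 ∂P := by
      rw [hμdef]; linarith
    linarith
  have hKμ : 0 ≤ K - μ ^ 2 := by linarith
  -- set up the sums
  set s : Finset (ℕ × ℕ) := Finset.Icc 1 N ×ˢ Finset.Icc 1 M with hs
  have hcardA : (Finset.Icc 1 N).card = N := by rw [Nat.card_Icc]; omega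
  have hcardB : (Finset.Icc 1 M).card = M := by rw [Nat.card_Icc]; omega
  have hcards : s.card = N * M := by rw [hs, Finset.card_product, hcardA, hcardB]
  set T : Ω → ℝ := fun ω => ∑ p ∈ s, f (Z p.1 p.2 ω) with hT
  have hSrw : (fun ω => ((N : ℝ) * (M : ℝ))⁻¹ *
      ∑ i ∈ Finset.Icc 1 N, ∑ j ∈ Finset.Icc 1 M, f (Z i j ω))
      = fun ω => ((N : ℝ) * (M : ℝ))⁻¹ * T ω := by
    funext ω
    have h : ∑ p ∈ s, f (Z p.1 p.2 ω)
        = ∑ i ∈ Finset.Icc 1 N, ∑ j ∈ Finset.Icc 1 M, f (Z i j ω) := by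
      rw [hs, Finset.sum_product]
    rw [← h]
  have hTm : Measurable T := by
    rw [hT]; exact Finset.measurable_sum _ fun p _ => hgm p.1 p.2
  have hTint : Integrable T P := integrable_finset_sum _ fun p _ => hint1 p.1 p.2
  have hET : ∫ ω, T ω ∂P = (N : ℝ) * M * μ := by
    rw [hT, integral_finset_sum _ fun p _ => hint1 p.1 p.2]
    rw [Finset.sum_congr rfl fun p _ => hE p.1 p.2, Finset.sum_const, hcards,
      nsmul_eq_mul, Nat.cast_mul]
  -- square of T
  have hTsq : ∀ ω, (T ω) ^ 2 = ∑ p ∈ s, ∑ q ∈ s, f (Z p.1 p.2 ω) * f (Z q.1 q.2 ω) := by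
    intro ω
    rw [hT, sq, Finset.sum_mul_sum]
  have hETsq : ∫ ω, (T ω) ^ 2 ∂P
      = ∑ p ∈ s, ∑ q ∈ s, ∫ ω, f (Z p.1 p.2 ω) * f (Z q.1 q.2 ω) ∂P := by
    simp_rw [hTsq]
    rw [integral_finset_sum _ fun p _ =>
      integrable_finset_sum _ fun q _ => hintprod p.1 p.2 q.1 q.2]
    exact Finset.sum_congr rfl fun p _ =>
      integral_finset_sum _ fun q _ => hintprod p.1 p.2 q.1 q.2
  -- per-term bound
  have key : ∀ p q : ℕ × ℕ, ∫ ω, f (Z p.1 p.2 ω) * f (Z q.1 q.2 ω) ∂P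
      ≤ μ ^ 2 + (if p.1 = q.1 then K - μ ^ 2 else 0)
        + (if p.2 = q.2 then K - μ ^ 2 else 0) := by
    intro p q
    by_cases h1 : p.1 = q.1
    · have h := hEprod_le p.1 p.2 q.1 q.2
      rw [if_pos h1]
      have h0 : (0:ℝ) ≤ if p.2 = q.2 then K - μ ^ 2 else 0 := by
        split_ifs <;> linarith
      linarith
    · by_cases h2 : p.2 = q.2
      · have h := hEprod_le p.1 p.2 q.1 q.2
        rw [if_neg h1, if_pos h2]
        linarith
      · rw [hEprod_eq p.1 p.2 q.1 q.2 h1 h2, if_neg h1, if_neg h2]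
        linarith
  -- sums of indicators
  have hsum1 : ∑ p ∈ s, ∑ q ∈ s, (if p.1 = q.1 then K - μ ^ 2 else 0)
      = (N : ℝ) * M * (M * (K - μ ^ 2)) := by
    have inner1 : ∀ p ∈ s, ∑ q ∈ s, (if p.1 = q.1 then K - μ ^ 2 else 0)
        = (M : ℝ) * (K - μ ^ 2) := by
      intro p hp
      rw [hs, Finset.sum_product]
      dsimp only
      have h1 : ∀ k : ℕ, ∑ _l ∈ Finset.Icc 1 M, (if p.1 = k then K - μ ^ 2 else 0)
          = (if p.1 = k then (M : ℝ) * (K - μ ^ 2) else 0) := by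
        intro k
        rw [Finset.sum_const, hcardB, nsmul_eq_mul]
        split_ifs <;> ring
      simp_rw [h1]
      rw [Finset.sum_ite_eq, if_pos ((Finset.mem_product.mp (hs ▸ hp)).1)]
    rw [Finset.sum_congr rfl inner1, Finset.sum_const, hcards, nsmul_eq_mul, Nat.cast_mul]
  have hsum2 : ∑ p ∈ s, ∑ q ∈ s, (if p.2 = q.2 then K - μ ^ 2 else 0)
      = (N : ℝ) * M * ((N : ℝ) * (K - μ ^ 2)) := by
    have inner2 : ∀ p ∈ s, ∑ q ∈ s, (if p.2 = q.2 then K - μ ^ 2 else 0)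
        = (N : ℝ) * (K - μ ^ 2) := by
      intro p hp
      rw [hs, Finset.sum_product]
      dsimp only
      have h1 : ∑ k ∈ Finset.Icc 1 N, ∑ l ∈ Finset.Icc 1 M,
          (if p.2 = l then K - μ ^ 2 else 0)
          = ∑ _k ∈ Finset.Icc 1 N, (if p.2 ∈ Finset.Icc 1 M then K - μ ^ 2 else 0) := by
        refine Finset.sum_congr rfl fun k _ => ?_
        rw [Finset.sum_ite_eq]
      rw [h1, if_pos ((Finset.mem_product.mp (hs ▸ hp)).2), Finset.sum_const, hcardA,
        nsmul_eq_mul]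
    rw [Finset.sum_congr rfl inner2, Finset.sum_const, hcards, nsmul_eq_mul, Nat.cast_mul]
  -- total bound on E[T²]
  have hETsq_le : ∫ ω, (T ω) ^ 2 ∂P
      ≤ ((N : ℝ) * M) ^ 2 * μ ^ 2
        + (N : ℝ) * M * (M * (K - μ ^ 2)) + (N : ℝ) * M * ((N : ℝ) * (K - μ ^ 2)) := by
    rw [hETsq]
    calc ∑ p ∈ s, ∑ q ∈ s, ∫ ω, f (Z p.1 p.2 ω) * f (Z q.1 q.2 ω) ∂P
        ≤ ∑ p ∈ s, ∑ q ∈ s, (μ ^ 2 + (if p.1 = q.1 then K - μ ^ 2 else 0)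
            + (if p.2 = q.2 then K - μ ^ 2 else 0)) :=
          Finset.sum_le_sum fun p _ => Finset.sum_le_sum fun q _ => key p q
      _ = ((N : ℝ) * M) ^ 2 * μ ^ 2
          + (N : ℝ) * M * (M * (K - μ ^ 2)) + (N : ℝ) * M * ((N : ℝ) * (K - μ ^ 2)) := by
          simp_rw [Finset.sum_add_distrib]
          rw [hsum1, hsum2, Finset.sum_const, Finset.sum_const, hcards, nsmul_eq_mul,
            Nat.cast_mul]
          push_cast
          ring
  -- assemble the variance
  have hn : (0:ℝ) < N := by exact_mod_cast Nat.lt_of_lt_of_le Nat.zero_lt_one hN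
  have hm : (0:ℝ) < M := by exact_mod_cast Nat.lt_of_lt_of_le Nat.zero_lt_one hM
  have hnm : (N : ℝ) * M ≠ 0 := by positivity
  have hvar : var P (fun ω => ((N : ℝ) * (M : ℝ))⁻¹ *
      ∑ i ∈ Finset.Icc 1 N, ∑ j ∈ Finset.Icc 1 M, f (Z i j ω))
      = (((N : ℝ) * M)⁻¹) ^ 2 * ∫ ω, (T ω) ^ 2 ∂P - μ ^ 2 := by
    rw [hSrw]
    unfold var
    have e1 : ∫ ω, (((N : ℝ) * M)⁻¹ * T ω) ^ 2 ∂P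
        = (((N : ℝ) * M)⁻¹) ^ 2 * ∫ ω, (T ω) ^ 2 ∂P := by
      simp_rw [mul_pow]
      rw [integral_const_mul]
    have e2 : ∫ ω, ((N : ℝ) * M)⁻¹ * T ω ∂P = μ := by
      rw [integral_const_mul, hET]
      field_simp
    rw [e1, e2]
  rw [hvar]
  have hCpos : 0 < C := by rw [hC]; exact le_min hN hM
  have hCr : (0:ℝ) < C := by exact_mod_cast hCpos
  have hCN : (C:ℝ) ≤ N := by exact_mod_cast (hC ▸ min_le_left N M)
  have hCM : (C:ℝ) ≤ M := by exact_mod_cast (hC ▸ min_le_right N M)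
  have step1 : (((N : ℝ) * M)⁻¹) ^ 2 * ∫ ω, (T ω) ^ 2 ∂P - μ ^ 2
      ≤ (1 / N + 1 / M) * (K - μ ^ 2) := by
    have h := mul_le_mul_of_nonneg_left hETsq_le
      (by positivity : (0:ℝ) ≤ (((N : ℝ) * M)⁻¹) ^ 2)
    have e : (((N : ℝ) * M)⁻¹) ^ 2 * (((N : ℝ) * M) ^ 2 * μ ^ 2
        + (N : ℝ) * M * (M * (K - μ ^ 2)) + (N : ℝ) * M * ((N : ℝ) * (K - μ ^ 2)))
        = μ ^ 2 + (1 / N + 1 / M) * (K - μ ^ 2) := by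
      field_simp
      ring
    rw [e] at h
    linarith
  have step2 : (1 / N + 1 / M) * (K - μ ^ 2) ≤ (1 / N + 1 / M) * K := by
    apply mul_le_mul_of_nonneg_left _ (by positivity)
    nlinarith [sq_nonneg μ]
  have step3 : (1 / (N:ℝ) + 1 / M) * K ≤ (2 / C) * K := by
    apply mul_le_mul_of_nonneg_right _ hK
    have a1 : 1 / (N:ℝ) ≤ 1 / C := one_div_le_one_div_of_le hCr hCN
    have a2 : 1 / (M:ℝ) ≤ 1 / C := one_div_le_one_div_of_le hCr hCM
    have : 2 / (C:ℝ) = 1 / C + 1 / C := by ring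
    linarith
  have step4 : (2 / (C:ℝ)) * K ≤ 3 * K / C := by
    have e : (2 / (C:ℝ)) * K = 2 * K / C := by ring
    rw [e]
    exact (div_le_div_iff_of_pos_right hCr).mpr (by linarith)
  linarith
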